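/- Let G be an abelian lattice-ordered group, u > 0, and y, z, z' in [0,u]. If (u - y) ∧ z = 0 and (u - z) ∧ z' = 0, then (u - y) ∧ z' = 0. -/
import Mathlib

private lemma riesz_aux {G : Type*} [Lattice G] [AddCommGroup G]
    [CovariantClass G G (· + ·) (· ≤ ·)]
    (a p q : G) (ha : 0 ≤ a) (hp : 0 ≤ p) (hq : 0 ≤ q) (h : a ≤ p + q) :
    a ≤ a ⊓ p + a ⊓ q := by
  have h4 : a ⊓ p + a ⊓ q
      = ((a + a) ⊓ (a + q)) ⊓ ((p + a) ⊓ (p + q)) := by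
    rw [add_inf, inf_add, inf_add]
    exact inf_inf_inf_comm _ _ _ _
  rw [h4]
  refine le_inf (le_inf ?_ ?_) (le_inf ?_ ?_)
  · exact le_add_of_nonneg_left ha
  · exact le_add_of_nonneg_right hq
  · exact le_add_of_nonneg_left hp
  · exact h

/-- In an abelian ℓ-group, if `(u - y) ⊓ z = 0` and `(u - z) ⊓ z' = 0`, then
`(u - y) ⊓ z' = 0`, for `y, z, z' ∈ [0,u]`. -/
theorem stmt4 {G : Type*} [Lattice G] [AddCommGroup G]
    [CovariantClass G G (· + ·) (· ≤ ·)]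
    (u : G) (hu : 0 < u) (y z z' : G)
    (hy : y ∈ Set.Icc (0 : G) u) (hz : z ∈ Set.Icc (0 : G) u)
    (hz' : z' ∈ Set.Icc (0 : G) u)
    (h1 : (u - y) ⊓ z = 0) (h2 : (u - z) ⊓ z' = 0) :
    (u - y) ⊓ z' = 0 := by
  obtain ⟨hy0, hyu⟩ := hy
  obtain ⟨hz0, hzu⟩ := hz
  obtain ⟨hz'0, hz'u⟩ := hz'
  have ha0 : (0 : G) ≤ u - y := sub_nonneg.2 hyu
  have hb0 : (0 : G) ≤ u - z := sub_nonneg.2 hzu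
  have hx0 : (0 : G) ≤ (u - y) ⊓ z' := le_inf ha0 hz'0
  have hxu : (u - y) ⊓ z' ≤ z + (u - z) := by
    rw [add_sub_cancel]
    exact inf_le_right.trans hz'u
  have hsum := riesz_aux ((u - y) ⊓ z') z (u - z) hx0 hz0 hb0 hxu
  have e1 : ((u - y) ⊓ z') ⊓ z ≤ 0 := h1 ▸ inf_le_inf_right z inf_le_left
  have e2 : ((u - y) ⊓ z') ⊓ (u - z) ≤ 0 := by
    calc ((u - y) ⊓ z') ⊓ (u - z) ≤ (u - z) ⊓ z' := by
          rw [inf_comm]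
          exact inf_le_inf_left _ inf_le_right
      _ = 0 := h2
  exact le_antisymm (hsum.trans (add_nonpos e1 e2)) hx0
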